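/- With the same setup, the Ricci trace of ψ_j(S) vanishes: Tr(Y ↦ ψ_j(S)(X,Y)Z) = 0 for all X, Z ∈ V. -/

import Mathlib

/-- The Ricci trace of `ψ_j(S)` vanishes:
`Tr(Y ↦ ψ_j(S)(X,Y)Z) = 0` for all `X, Z`. -/
theorem psi_ricci_trace_zero
    (V : Type*) [AddCommGroup V] [Module ℝ V] [FiniteDimensional ℝ V]
    (n : ℕ) (hdim : Module.finrank ℝ V = 2 * n)
    (g : V →ₗ[ℝ] V →ₗ[ℝ] ℝ)
    (hnd : ∀ X : V, (∀ Y : V, g X Y = 0) → X = 0)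
    (hgsym : ∀ X Y : V, g X Y = g Y X)
    (j : V →ₗ[ℝ] V) (hj : j ∘ₗ j = -LinearMap.id)
    (hcompat : ∀ X Y : V, g (j X) (j Y) = g X Y)
    (S : V →ₗ[ℝ] V →ₗ[ℝ] ℝ)
    (hSanti : ∀ X Y : V, S X Y = -S Y X)
    (hSj : ∀ X Y : V, S (j X) (j Y) = -S X Y)
    (ψ : V →ₗ[ℝ] V →ₗ[ℝ] V →ₗ[ℝ] V)
    (hψ : ∀ X Y Z W : V, g (ψ X Y Z) W
      = 2 * g X (j Y) * S Z (j W) + 2 * g Z (j W) * S X (j Y)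
        + g X (j Z) * S Y (j W) + g Y (j W) * S X (j Z)
        - g X (j W) * S Y (j Z) - g Y (j Z) * S X (j W)) :
    ∀ X Z : V, LinearMap.trace ℝ V ((ψ X).flip Z) = 0 := by
  classical
  intro X Z
  have hjj : ∀ v : V, j (j v) = -v := by
    intro v
    have := congrFun (congrArg (DFunLike.coe) hj) v
    simpa using this
  -- j-cross identity for S : S (j v) w = S v (j w)
  have hSjc : ∀ v w : V, S (j v) w = S v (j w) := by
    intro v w
    have h := hSj v (j w)
    rw [hjj] at h
    simpa using h
  -- j-cross identity for g : g v (j w) = - g (j v) w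
  have hgjc : ∀ v w : V, g v (j w) = - g (j v) w := by
    intro v w
    have h := hcompat v (j w)  -- g (j v) (j (j w)) = g v (j w)
    rw [hjj] at h
    simpa using h.symm
  have hndB : LinearMap.BilinForm.Nondegenerate g :=
    ⟨hnd, fun Y hY => hnd Y (fun X => by rw [hgsym]; exact hY X)⟩
  set b : Module.Basis (Fin (Module.finrank ℝ V)) ℝ V := Module.finBasis ℝ V with hb
  set f : Module.Basis (Fin (Module.finrank ℝ V)) ℝ V :=
    LinearMap.BilinForm.dualBasis g hndB b with hf
  have hfb : ∀ i k, g (f i) (b k) = if k = i then 1 else 0 := by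
    intro i k
    rw [hf]
    exact LinearMap.BilinForm.apply_dualBasis_left hndB b i k
  have hfrepr : ∀ (w : V) (i), f.repr w i = g w (b i) := by
    intro w i
    rw [hf]
    exact LinearMap.BilinForm.dualBasis_repr_apply hndB b w i
  have hfv : ∀ (i) (v : V), g (f i) v = b.repr v i := by
    intro i v
    conv_lhs => rw [← b.sum_repr v]
    rw [map_sum]
    simp only [map_smul, smul_eq_mul, hfb, mul_ite, mul_one, mul_zero]
    simp
  -- first key sum identity
  have key1 : ∀ (α β : V →ₗ[ℝ] ℝ) (w : V), (∀ v, g w v = α v) →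
      ∑ i, α (b i) * β (f i) = β w := by
    intro α β w hw
    have h1 : ∑ i, α (b i) • f i = w := by
      have h2 := f.sum_repr w
      rw [← h2]
      refine Finset.sum_congr rfl ?_
      intro i _
      congr 1
      rw [hfrepr, hw]
    calc ∑ i, α (b i) * β (f i) = β (∑ i, α (b i) • f i) := by
          rw [map_sum]; simp [smul_eq_mul]
      _ = β w := by rw [h1]
  -- second key sum identity
  have key2 : ∀ (α β : V →ₗ[ℝ] ℝ) (w : V), (∀ v, g w v = β v) →
      ∑ i, α (b i) * β (f i) = α w := by
    intro α β w hw
    have h1 : ∑ i, β (f i) • b i = w := by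
      have h2 := b.sum_repr w
      rw [← h2]
      refine Finset.sum_congr rfl ?_
      intro i _
      congr 1
      rw [← hw (f i), hgsym, hfv]
    calc ∑ i, α (b i) * β (f i) = α (∑ i, β (f i) • b i) := by
          rw [map_sum]; simp [smul_eq_mul, mul_comm]
      _ = α w := by rw [h1]
  -- antisymmetric bilinear forms have vanishing "g-trace"
  have skew : ∀ (B : V →ₗ[ℝ] V →ₗ[ℝ] ℝ), (∀ v w, B v w = - B w v) →
      ∑ i, B (b i) (f i) = 0 := by
    intro B hB
    have expand : ∑ i, B (b i) (f i)
        = ∑ i, ∑ k, g (f i) (f k) * B (b i) (b k) := by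
      refine Finset.sum_congr rfl ?_
      intro i _
      conv_lhs => rw [← b.sum_repr (f i)]
      rw [map_sum]
      refine Finset.sum_congr rfl ?_
      intro k _
      rw [map_smul, smul_eq_mul, ← hfv k (f i), hgsym]
    have hswap : (∑ i, ∑ k, g (f i) (f k) * B (b i) (b k))
        = - ∑ i, ∑ k, g (f i) (f k) * B (b i) (b k) := by
      conv_lhs => rw [Finset.sum_comm]
      rw [← Finset.sum_neg_distrib]
      refine Finset.sum_congr rfl ?_
      intro i _
      rw [← Finset.sum_neg_distrib]
      refine Finset.sum_congr rfl ?_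
      intro k _
      rw [hB (b k) (b i), hgsym (f k) (f i)]
      ring
    rw [expand]
    linarith [hswap]
  -- the trace as a sum
  have htr : LinearMap.trace ℝ V ((ψ X).flip Z)
      = ∑ i, g (f i) (ψ X (b i) Z) := by
    rw [LinearMap.trace_eq_matrix_trace ℝ b]
    rw [Matrix.trace]
    refine Finset.sum_congr rfl ?_
    intro i _
    rw [Matrix.diag_apply, LinearMap.toMatrix_apply, hfv, LinearMap.flip_apply]
  have htr2 : LinearMap.trace ℝ V ((ψ X).flip Z)
      = ∑ i, (2 * g X (j (b i)) * S Z (j (f i)) + 2 * g Z (j (f i)) * S X (j (b i))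
        + g X (j Z) * S (b i) (j (f i)) + g (b i) (j (f i)) * S X (j Z)
        - g X (j (f i)) * S (b i) (j Z) - g (b i) (j Z) * S X (j (f i))) := by
    rw [htr]
    refine Finset.sum_congr rfl ?_
    intro i _
    rw [hgsym, hψ]
  -- the six partial sums
  have h1 : ∑ i, g X (j (b i)) * S Z (j (f i)) = S Z X := by
    have := key1 ((g X).comp j) ((S Z).comp j) (-(j X)) ?_
    · simpa [hjj] using this
    · intro v
      simp only [LinearMap.comp_apply, map_neg, LinearMap.neg_apply]
      rw [hgjc X v]
  have h2 : ∑ i, g Z (j (f i)) * S X (j (b i)) = S X Z := by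
    have := key2 ((S X).comp j) ((g Z).comp j) (-(j Z)) ?_
    · have h' : ∑ i, g Z (j (f i)) * S X (j (b i))
          = ∑ i, ((S X).comp j) (b i) * ((g Z).comp j) (f i) := by
        refine Finset.sum_congr rfl ?_
        intro i _
        simp only [LinearMap.comp_apply]
        ring
      rw [h'] at *
      rw [this]
      simp [hjj]
    · intro v
      simp only [LinearMap.comp_apply, map_neg, LinearMap.neg_apply]
      rw [hgjc Z v]
  have h3 : ∑ i, S (b i) (j (f i)) = 0 := by
    refine skew (S.compl₂ j) ?_
    intro v w
    simp only [LinearMap.compl₂_apply]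
    rw [← hSjc v w, hSanti (j v) w]
  have h4 : ∑ i, g (b i) (j (f i)) = 0 := by
    refine skew (g.compl₂ j) ?_
    intro v w
    simp only [LinearMap.compl₂_apply]
    rw [hgjc v w, hgsym]
  have h5 : ∑ i, g X (j (f i)) * S (b i) (j Z) = S X Z := by
    have := key2 (S (j Z)) ((g X).comp j) (-(j X)) ?_
    · have h' : ∑ i, g X (j (f i)) * S (b i) (j Z)
          = - ∑ i, (S (j Z)) (b i) * ((g X).comp j) (f i) := by
        rw [← Finset.sum_neg_distrib]
        refine Finset.sum_congr rfl ?_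
        intro i _
        rw [hSanti (b i) (j Z)]
        simp only [LinearMap.comp_apply]
        ring
      rw [h', this]
      simp only [map_neg, neg_neg]
      rw [hSj Z X]  -- S (j Z) (j X) = - S Z X
      rw [hSanti Z X]
      ring
    · intro v
      simp only [LinearMap.comp_apply, map_neg, LinearMap.neg_apply]
      rw [hgjc X v]
  have h6 : ∑ i, g (b i) (j Z) * S X (j (f i)) = - S X Z := by
    have := key1 (g (j Z)) ((S X).comp j) (j Z) (fun v => rfl)
    have h' : ∑ i, g (b i) (j Z) * S X (j (f i))
        = ∑ i, (g (j Z)) (b i) * ((S X).comp j) (f i) := by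
      refine Finset.sum_congr rfl ?_
      intro i _
      rw [hgsym (b i) (j Z)]
      simp only [LinearMap.comp_apply]
    rw [h', this]
    simp only [LinearMap.comp_apply]
    rw [hjj]
    simp
  -- put everything together
  rw [htr2]
  have hsplit : ∑ i, (2 * g X (j (b i)) * S Z (j (f i)) + 2 * g Z (j (f i)) * S X (j (b i))
        + g X (j Z) * S (b i) (j (f i)) + g (b i) (j (f i)) * S X (j Z)
        - g X (j (f i)) * S (b i) (j Z) - g (b i) (j Z) * S X (j (f i)))
      = 2 * (∑ i, g X (j (b i)) * S Z (j (f i))) + 2 * (∑ i, g Z (j (f i)) * S X (j (b i)))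
        + g X (j Z) * (∑ i, S (b i) (j (f i))) + (∑ i, g (b i) (j (f i))) * S X (j Z)
        - (∑ i, g X (j (f i)) * S (b i) (j Z)) - (∑ i, g (b i) (j Z) * S X (j (f i))) := by
    simp only [Finset.mul_sum, Finset.sum_mul, ← Finset.sum_add_distrib,
      ← Finset.sum_sub_distrib, mul_assoc]
  rw [hsplit, h1, h2, h3, h4, h5, h6]
  have := hSanti X Z
  ring_nf
  linarith [hSanti X Z]
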